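/- With D_{λ;0} the sl2-module induced from the one-dimensional C[h,Ω]-module with h-eigenvalue λ and Casimir eigenvalue 0: if v ∈ D_{λ;0} is a non-zero vector with e·v = 0, then the h-eigenvalue of v lies in {0, −2, 2}. Consequently, D_{λ;0} is a simple sl2-module whenever λ ∉ 2Z. -/

import Mathlib

/-- The `μ`-eigenspace of the action of an element `H` of a Lie algebra on a module. -/
def hEigenspace {g : Type} [LieRing g] [LieAlgebra ℂ g] (H : g)
    (M : Type) [AddCommGroup M] [Module ℂ M] [LieRingModule g M] [LieModule ℂ g M]
    (μ : ℂ) : Submodule ℂ M where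
  carrier := {m : M | ⁅H, m⁆ = μ • m}
  add_mem' := by
    intro a b ha hb
    simp only [Set.mem_setOf_eq] at *
    rw [lie_add, ha, hb, smul_add]
  zero_mem' := by simp
  smul_mem' := by
    intro c a ha
    simp only [Set.mem_setOf_eq] at *
    rw [lie_smul, ha, smul_comm]

private lemma lie_finset_sum {g : Type} [LieRing g] [LieAlgebra ℂ g]
    {M : Type} [AddCommGroup M] [Module ℂ M] [LieRingModule g M] [LieModule ℂ g M]
    (x : g) (s : Finset ℤ) (f : ℤ → M) :
    ⁅x, ∑ i ∈ s, f i⁆ = ∑ i ∈ s, ⁅x, f i⁆ := by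
  classical
  induction s using Finset.induction_on with
  | empty => simp
  | @insert _ _ h ih => rw [Finset.sum_insert h, Finset.sum_insert h, lie_add, ih]

private lemma eigen_comp_mem {g : Type} [LieRing g] [LieAlgebra ℂ g]
    {M : Type} [AddCommGroup M] [Module ℂ M] [LieRingModule g M] [LieModule ℂ g M]
    (H : g) (Q : LieSubmodule ℂ g M) (μ : ℤ → ℂ) (hμ : Function.Injective μ) :
    ∀ s : Finset ℤ, ∀ m : ℤ → M, (∀ k ∈ s, ⁅H, m k⁆ = μ k • m k) →
      (∑ k ∈ s, m k) ∈ Q → ∀ k ∈ s, m k ∈ Q := by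
  intro s
  induction s using Finset.induction_on with
  | empty => intro m _ _ k hk; simp at hk
  | @insert j t hj ih =>
    intro m hm hsum k hk
    have hqt : (∑ k ∈ t, (μ k - μ j) • m k) ∈ Q := by
      have h1 : ⁅H, (∑ k ∈ insert j t, m k)⁆ - μ j • (∑ k ∈ insert j t, m k) ∈ Q :=
        sub_mem (Q.lie_mem hsum) (SMulMemClass.smul_mem _ hsum)
      have h2 : ⁅H, (∑ k ∈ insert j t, m k)⁆ - μ j • (∑ k ∈ insert j t, m k)
          = ∑ k ∈ t, (μ k - μ j) • m k := by
        calc ⁅H, (∑ k ∈ insert j t, m k)⁆ - μ j • (∑ k ∈ insert j t, m k)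
            = ∑ k ∈ insert j t, (⁅H, m k⁆ - μ j • m k) := by
              rw [lie_finset_sum, Finset.smul_sum, Finset.sum_sub_distrib]
          _ = ∑ k ∈ insert j t, (μ k - μ j) • m k :=
              Finset.sum_congr rfl (fun k hk => by rw [hm k hk, sub_smul])
          _ = (μ j - μ j) • m j + ∑ k ∈ t, (μ k - μ j) • m k := Finset.sum_insert hj
          _ = ∑ k ∈ t, (μ k - μ j) • m k := by rw [sub_self, zero_smul, zero_add]
      rwa [h2] at h1
    have hmt : ∀ k ∈ t, m k ∈ Q := by
      intro k hk
      have h5 := ih (fun k => (μ k - μ j) • m k)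
        (fun k hk => by rw [lie_smul, hm k (Finset.mem_insert_of_mem hk), smul_comm]) hqt k hk
      have hne : μ k - μ j ≠ 0 := sub_ne_zero.mpr (fun h => hj (hμ h ▸ hk))
      have h6 := SMulMemClass.smul_mem (μ k - μ j)⁻¹ h5
      rwa [smul_smul, inv_mul_cancel₀ hne, one_smul] at h6
    rcases Finset.mem_insert.mp hk with rfl | hk
    · have h7 : m k = (∑ i ∈ insert k t, m i) - ∑ i ∈ t, m i := by
        rw [Finset.sum_insert hj]; abel
      rw [h7]
      exact sub_mem hsum (sum_mem hmt)
    · exact hmt k hk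

/-- Let `D_{λ;0}` be the `sl₂`-module induced from the one-dimensional `ℂ[H,Ω]`-module with
`H`-eigenvalue `λ` and Casimir eigenvalue `0` (characterised by its cyclic vector `v` and
the universal property of induction).  If `w ∈ D_{λ;0}` is a non-zero vector with
`E·w = 0` and `H`-eigenvalue `μ`, then `μ ∈ {0, −2, 2}`.  Consequently, `D_{λ;0}` is a
simple `sl₂`-module whenever `λ ∉ 2ℤ`. -/
theorem induced_module_highest_weights_and_simplicity
    (g : Type) [LieRing g] [LieAlgebra ℂ g]
    (H E F : g)
    (hHE : ⁅H, E⁆ = (2 : ℂ) • E) (hHF : ⁅H, F⁆ = (-2 : ℂ) • F) (hEF : ⁅E, F⁆ = H)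
    (hspan : Submodule.span ℂ {H, E, F} = ⊤)
    (lam : ℂ)
    (M : Type) [AddCommGroup M] [Module ℂ M] [LieRingModule g M] [LieModule ℂ g M]
    (v : M) (hv : v ≠ 0)
    (hHv : ⁅H, v⁆ = lam • v)
    (hΩv : ⁅E, ⁅F, v⁆⁆ + ⁅F, ⁅E, v⁆⁆ + (2⁻¹ : ℂ) • ⁅H, ⁅H, v⁆⁆ = 0)
    (hgen : LieSubmodule.lieSpan ℂ g {v} = ⊤)
    (huniv : ∀ (M' : Type) [AddCommGroup M'] [Module ℂ M'] [LieRingModule g M']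
      [LieModule ℂ g M'] (v' : M'),
      ⁅H, v'⁆ = lam • v' →
      ⁅E, ⁅F, v'⁆⁆ + ⁅F, ⁅E, v'⁆⁆ + (2⁻¹ : ℂ) • ⁅H, ⁅H, v'⁆⁆ = 0 →
      ∃! φ : M →ₗ[ℂ] M', (∀ (x : g) (m : M), φ ⁅x, m⁆ = ⁅x, φ m⁆) ∧ φ v = v') :
    (∀ (w : M) (μ : ℂ), w ≠ 0 → ⁅E, w⁆ = 0 → ⁅H, w⁆ = μ • w →
        μ ∈ ({0, -2, 2} : Set ℂ)) ∧
      ((¬ ∃ n : ℤ, lam = 2 * (n : ℂ)) →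
        Nontrivial M ∧ ∀ Q : LieSubmodule ℂ g M, Q = ⊥ ∨ Q = ⊤) := by
  classical
  -- the Casimir operator as a function
  set Om : M → M := fun m => ⁅E, ⁅F, m⁆⁆ + ⁅F, ⁅E, m⁆⁆ + (2⁻¹ : ℂ) • ⁅H, ⁅H, m⁆⁆ with hOm
  have Om_add : ∀ m m' : M, Om (m + m') = Om m + Om m' := by
    intro m m'; simp only [hOm, lie_add, smul_add]; abel
  have Om_smul : ∀ (c : ℂ) (m : M), Om (c • m) = c • Om m := by
    intro c m; simp only [hOm, lie_smul, smul_add, smul_comm c]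
  -- commutation relations in the module
  have hFEb : ⁅F, E⁆ = -H := by rw [← lie_skew, hEF]
  have rHE : ∀ m : M, ⁅H, ⁅E, m⁆⁆ = (2:ℂ) • ⁅E, m⁆ + ⁅E, ⁅H, m⁆⁆ := by
    intro m; rw [leibniz_lie, hHE, smul_lie]
  have rHF : ∀ m : M, ⁅H, ⁅F, m⁆⁆ = (-2:ℂ) • ⁅F, m⁆ + ⁅F, ⁅H, m⁆⁆ := by
    intro m; rw [leibniz_lie, hHF, smul_lie]
  have rEF : ∀ m : M, ⁅E, ⁅F, m⁆⁆ = ⁅H, m⁆ + ⁅F, ⁅E, m⁆⁆ := by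
    intro m; rw [leibniz_lie, hEF]
  have rFE : ∀ m : M, ⁅F, ⁅E, m⁆⁆ = ⁅E, ⁅F, m⁆⁆ - ⁅H, m⁆ := by
    intro m; rw [leibniz_lie, hFEb, neg_lie]; abel
  have rEH : ∀ m : M, ⁅E, ⁅H, m⁆⁆ = ⁅H, ⁅E, m⁆⁆ - (2:ℂ) • ⁅E, m⁆ := by
    intro m; rw [rHE m]; abel
  have rFH : ∀ m : M, ⁅F, ⁅H, m⁆⁆ = ⁅H, ⁅F, m⁆⁆ + (2:ℂ) • ⁅F, m⁆ := by
    intro m; rw [rHF m]; module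
  -- Om commutes with the action of H, E, F
  have cH : ∀ m : M, ⁅H, Om m⁆ = Om ⁅H, m⁆ := by
    intro m
    simp only [hOm, lie_add, lie_smul]
    rw [rHE (⁅F, m⁆), rHF (⁅E, m⁆), rHF m, rHE m]
    simp only [lie_add, lie_smul, smul_add]
    module
  have cE : ∀ m : M, ⁅E, Om m⁆ = Om ⁅E, m⁆ := by
    intro m
    have t1 : ⁅E, ⁅E, ⁅F, m⁆⁆⁆
        = (2:ℂ) • ⁅H, ⁅E, m⁆⁆ - (2:ℂ) • ⁅E, m⁆ + ⁅F, ⁅E, ⁅E, m⁆⁆⁆ := by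
      rw [rEF m, lie_add, rEH m, rEF (⁅E, m⁆)]; module
    have t3 : ⁅E, ⁅H, ⁅H, m⁆⁆⁆
        = ⁅H, ⁅H, ⁅E, m⁆⁆⁆ - (4:ℂ) • ⁅H, ⁅E, m⁆⁆ + (4:ℂ) • ⁅E, m⁆ := by
      rw [rEH (⁅H, m⁆), rEH m]
      simp only [lie_sub, lie_smul]
      module
    simp only [hOm, lie_add, lie_smul]
    rw [t1, t3, rEF (⁅E, m⁆)]
    module
  have cF : ∀ m : M, ⁅F, Om m⁆ = Om ⁅F, m⁆ := by
    intro m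
    have u2 : ⁅F, ⁅F, ⁅E, m⁆⁆⁆
        = ⁅E, ⁅F, ⁅F, m⁆⁆⁆ - (2:ℂ) • ⁅H, ⁅F, m⁆⁆ - (2:ℂ) • ⁅F, m⁆ := by
      rw [rFE m, lie_sub, rFH m, rFE (⁅F, m⁆)]; module
    have u3 : ⁅F, ⁅H, ⁅H, m⁆⁆⁆
        = ⁅H, ⁅H, ⁅F, m⁆⁆⁆ + (4:ℂ) • ⁅H, ⁅F, m⁆⁆ + (4:ℂ) • ⁅F, m⁆ := by
      rw [rFH (⁅H, m⁆), rFH m]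
      simp only [lie_add, lie_smul]
      module
    simp only [hOm, lie_add, lie_smul]
    rw [u2, u3, rFE (⁅F, m⁆)]
    module
  -- Om commutes with the action of every element of g
  have cAll : ∀ (x : g) (m : M), ⁅x, Om m⁆ = Om ⁅x, m⁆ := by
    have hT : Submodule.span ℂ {H, E, F} ≤
        ({ carrier := {x : g | ∀ m : M, ⁅x, Om m⁆ = Om ⁅x, m⁆}
           add_mem' := by
             intro a b ha hb m
             simp only [Set.mem_setOf_eq] at ha hb ⊢
             rw [add_lie, add_lie, ha, hb, Om_add]
           zero_mem' := by
             intro m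
             have h00 : Om (0 : M) = 0 := by
               have := Om_smul 0 0; simpa using this
             simp only [Set.mem_setOf_eq, zero_lie, h00]
           smul_mem' := by
             intro c a ha m
             simp only [Set.mem_setOf_eq] at ha ⊢
             rw [smul_lie, smul_lie, ha, Om_smul] } : Submodule ℂ g) := by
      apply Submodule.span_le.mpr
      intro x hx
      simp only [Set.mem_insert_iff, Set.mem_singleton_iff] at hx
      rcases hx with rfl | rfl | rfl
      · exact cH
      · exact cE
      · exact cF
    intro x m
    exact (hT (by rw [hspan]; trivial)) m
  -- Om vanishes identically
  have Om0 : ∀ m : M, Om m = 0 := by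
    have hOm0 : Om (0 : M) = 0 := by have := Om_smul 0 0; simpa using this
    set K : LieSubmodule ℂ g M :=
      { carrier := {m : M | Om m = 0}
        add_mem' := by
          intro a b ha hb
          simp only [Set.mem_setOf_eq] at ha hb ⊢
          rw [Om_add, ha, hb, add_zero]
        zero_mem' := hOm0
        smul_mem' := by
          intro c a ha
          simp only [Set.mem_setOf_eq] at ha ⊢
          rw [Om_smul, ha, smul_zero]
        lie_mem := by
          intro x m hm
          simp only [Set.mem_setOf_eq] at hm ⊢
          rw [← cAll, hm, lie_zero] } with hK
    have hvK : v ∈ K := hΩv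
    have hle : LieSubmodule.lieSpan ℂ g {v} ≤ K :=
      LieSubmodule.lieSpan_le.mpr (Set.singleton_subset_iff.mpr hvK)
    rw [hgen] at hle
    intro m
    exact hle (LieSubmodule.mem_top m)
  -- scalar action of EF and FE on weight vectors
  have hA : ∀ (m : M) (μ : ℂ), ⁅H, m⁆ = μ • m →
      ⁅E, ⁅F, m⁆⁆ = (μ/2 - μ^2/4) • m := by
    intro m μ hm
    have h0 := Om0 m
    simp only [hOm] at h0
    have hBA : ⁅F, ⁅E, m⁆⁆ = ⁅E, ⁅F, m⁆⁆ - μ • m := by rw [rFE m, hm]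
    rw [hBA, hm, lie_smul, hm] at h0
    have h4 : (2:ℂ) • ⁅E, ⁅F, m⁆⁆ - (μ - 2⁻¹*(μ*μ)) • m = 0 := by
      rw [← h0]; module
    have h2 := sub_eq_zero.mp h4
    calc ⁅E, ⁅F, m⁆⁆ = (2⁻¹:ℂ) • ((2:ℂ) • ⁅E, ⁅F, m⁆⁆) := by
          rw [smul_smul]; norm_num
      _ = (2⁻¹:ℂ) • ((μ - 2⁻¹*(μ*μ)) • m) := by rw [h2]
      _ = (μ/2 - μ^2/4) • m := by rw [smul_smul]; congr 1; ring
  have hB : ∀ (m : M) (μ : ℂ), ⁅H, m⁆ = μ • m →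
      ⁅F, ⁅E, m⁆⁆ = (-μ/2 - μ^2/4) • m := by
    intro m μ hm
    have h1 := hA m μ hm
    rw [rFE m, h1, hm]
    module
  constructor
  · -- part 1: highest weight vectors
    intro w μ hw hEw hHw
    have h0 := Om0 w
    simp only [hOm] at h0
    rw [rEF w, hEw, lie_zero, hHw, lie_smul, hHw] at h0
    have h1 : (μ + 2⁻¹*(μ*μ)) • w = 0 := by rw [← h0]; module
    have hμ0 : μ + 2⁻¹*(μ*μ) = 0 := by
      rcases smul_eq_zero.mp h1 with h | h
      · exact h
      · exact absurd h hw
    have hfac : μ * (μ + 2) = 0 := by linear_combination 2 * hμ0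
    simp only [Set.mem_insert_iff, Set.mem_singleton_iff]
    rcases mul_eq_zero.mp hfac with h | h
    · exact Or.inl h
    · exact Or.inr (Or.inl (by linear_combination h))
  · -- part 2: simplicity
    intro hlam
    have hne : ∀ μ : ℂ, (∃ n : ℤ, μ = lam + 2 * n) → μ ≠ 0 ∧ μ ≠ 2 ∧ μ ≠ -2 := by
      rintro μ ⟨n, rfl⟩
      refine ⟨?_, ?_, ?_⟩
      · intro h; exact hlam ⟨-n, by push_cast; linear_combination h⟩
      · intro h; exact hlam ⟨1 - n, by push_cast; linear_combination h⟩
      · intro h; exact hlam ⟨-1 - n, by push_cast; linear_combination h⟩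
    refine ⟨⟨v, 0, hv⟩, ?_⟩
    intro Q
    by_cases hQ : Q = ⊥
    · exact Or.inl hQ
    right
    -- the ladder sequences
    set a : ℕ → M := fun n => (fun m => ⁅E, m⁆)^[n] v with ha
    set b : ℕ → M := fun n => (fun m => ⁅F, m⁆)^[n] v with hb
    have ha0 : a 0 = v := rfl
    have hb0 : b 0 = v := rfl
    have haS : ∀ n, a (n+1) = ⁅E, a n⁆ := by
      intro n; simp only [ha]; rw [Function.iterate_succ_apply']
    have hbS : ∀ n, b (n+1) = ⁅F, b n⁆ := by
      intro n; simp only [hb]; rw [Function.iterate_succ_apply']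
    have Ha : ∀ n : ℕ, ⁅H, a n⁆ = (lam + 2 * n) • a n := by
      intro n
      induction n with
      | zero => simpa [ha0] using hHv
      | succ n ih =>
        rw [haS, rHE, ih, lie_smul]
        push_cast
        module
    have Hb : ∀ n : ℕ, ⁅H, b n⁆ = (lam - 2 * n) • b n := by
      intro n
      induction n with
      | zero => simpa [hb0] using hHv
      | succ n ih =>
        rw [hbS, rHF, ih, lie_smul]
        push_cast
        module
    have Fa : ∀ n : ℕ, ⁅F, a (n+1)⁆ = (-(lam + 2*n)/2 - (lam + 2*n)^2/4) • a n := by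
      intro n; rw [haS]; exact hB (a n) _ (Ha n)
    have Eb : ∀ n : ℕ, ⁅E, b (n+1)⁆ = ((lam - 2*n)/2 - (lam - 2*n)^2/4) • b n := by
      intro n; rw [hbS]; exact hA (b n) _ (Hb n)
    have Fa_ne : ∀ n : ℕ, (-(lam + 2*(n:ℂ))/2 - (lam + 2*n)^2/4) ≠ 0 := by
      intro n
      obtain ⟨h0, _, h2⟩ := hne (lam + 2*n) ⟨n, by push_cast; ring⟩
      intro h
      have hf : (lam + 2*n) * ((lam + 2*n) + 2) = 0 := by linear_combination (-4 : ℂ) * h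
      rcases mul_eq_zero.mp hf with h' | h'
      · exact h0 h'
      · exact h2 (by linear_combination h')
    have Eb_ne : ∀ n : ℕ, ((lam - 2*(n:ℂ))/2 - (lam - 2*n)^2/4) ≠ 0 := by
      intro n
      obtain ⟨h0, h2, _⟩ := hne (lam - 2*n) ⟨-n, by push_cast; ring⟩
      intro h
      have hf : (lam - 2*n) * ((lam - 2*n) - 2) = 0 := by linear_combination (-4 : ℂ) * h
      rcases mul_eq_zero.mp hf with h' | h'
      · exact h0 h'
      · exact h2 (by linear_combination h')
    -- the span of the two ladders is everything
    set S : Submodule ℂ M := Submodule.span ℂ (Set.range a ∪ Set.range b) with hS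
    have memS_a : ∀ n, a n ∈ S := fun n => Submodule.subset_span (Or.inl ⟨n, rfl⟩)
    have memS_b : ∀ n, b n ∈ S := fun n => Submodule.subset_span (Or.inr ⟨n, rfl⟩)
    have sH : ∀ m ∈ S, ⁅H, m⁆ ∈ S := by
      intro m hm
      induction hm using Submodule.span_induction with
      | mem x hx =>
        rcases hx with ⟨n, rfl⟩ | ⟨n, rfl⟩
        · rw [Ha]; exact S.smul_mem _ (memS_a n)
        · rw [Hb]; exact S.smul_mem _ (memS_b n)
      | zero => simp
      | add x y _ _ hx hy => rw [lie_add]; exact S.add_mem hx hy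
      | smul c x _ hx => rw [lie_smul]; exact S.smul_mem c hx
    have sE : ∀ m ∈ S, ⁅E, m⁆ ∈ S := by
      intro m hm
      induction hm using Submodule.span_induction with
      | mem x hx =>
        rcases hx with ⟨n, rfl⟩ | ⟨n, rfl⟩
        · rw [← haS]; exact memS_a (n+1)
        · cases n with
          | zero => rw [hb0, ← ha0, ← haS]; exact memS_a 1
          | succ n => rw [Eb]; exact S.smul_mem _ (memS_b n)
      | zero => simp
      | add x y _ _ hx hy => rw [lie_add]; exact S.add_mem hx hy
      | smul c x _ hx => rw [lie_smul]; exact S.smul_mem c hx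
    have sF : ∀ m ∈ S, ⁅F, m⁆ ∈ S := by
      intro m hm
      induction hm using Submodule.span_induction with
      | mem x hx =>
        rcases hx with ⟨n, rfl⟩ | ⟨n, rfl⟩
        · cases n with
          | zero => rw [ha0, ← hb0, ← hbS]; exact memS_b 1
          | succ n => rw [Fa]; exact S.smul_mem _ (memS_a n)
        · rw [← hbS]; exact memS_b (n+1)
      | zero => simp
      | add x y _ _ hx hy => rw [lie_add]; exact S.add_mem hx hy
      | smul c x _ hx => rw [lie_smul]; exact S.smul_mem c hx
    have sAll : ∀ (x : g), ∀ m ∈ S, ⁅x, m⁆ ∈ S := by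
      have hT : Submodule.span ℂ {H, E, F} ≤
          ({ carrier := {x : g | ∀ m ∈ S, ⁅x, m⁆ ∈ S}
             add_mem' := by
               intro p q hp hq m hm
               rw [add_lie]; exact S.add_mem (hp m hm) (hq m hm)
             zero_mem' := by intro m _; rw [zero_lie]; exact S.zero_mem
             smul_mem' := by
               intro c p hp m hm
               rw [smul_lie]; exact S.smul_mem c (hp m hm) } : Submodule ℂ g) := by
        apply Submodule.span_le.mpr
        intro x hx
        simp only [Set.mem_insert_iff, Set.mem_singleton_iff] at hx
        rcases hx with rfl | rfl | rfl
        · exact sH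
        · exact sE
        · exact sF
      intro x
      exact hT (by rw [hspan]; trivial)
    have Stop : ∀ m : M, m ∈ S := by
      set N : LieSubmodule ℂ g M :=
        { S with lie_mem := fun {x m} hm => sAll x m hm } with hN
      have hvN : v ∈ N := memS_a 0
      have hle : LieSubmodule.lieSpan ℂ g {v} ≤ N :=
        LieSubmodule.lieSpan_le.mpr (Set.singleton_subset_iff.mpr hvN)
      rw [hgen] at hle
      intro m
      exact hle (LieSubmodule.mem_top m)
    -- the ℤ-indexed family
    set vk : ℤ → M := fun k => if 0 ≤ k then a k.toNat else b (-k).toNat with hvk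
    have hvka : ∀ n : ℕ, vk n = a n := by
      intro n; simp [hvk]
    have hvkb : ∀ n : ℕ, vk (-(n:ℤ)) = b n := by
      intro n
      cases n with
      | zero => simp [hvk, ha0, hb0]
      | succ n =>
        simp only [hvk]
        rw [if_neg (by omega)]
        congr 1
    have hrange : Set.range a ∪ Set.range b ⊆ Set.range vk := by
      rintro x (⟨n, rfl⟩ | ⟨n, rfl⟩)
      · exact ⟨n, hvka n⟩
      · exact ⟨-(n:ℤ), hvkb n⟩
    have Hvk : ∀ k : ℤ, ⁅H, vk k⁆ = (lam + 2 * k) • vk k := by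
      intro k
      rcases le_or_gt 0 k with hk | hk
      · obtain ⟨n, rfl⟩ := Int.eq_ofNat_of_zero_le hk
        rw [hvka, Ha n]
        congr 1
      · obtain ⟨n, rfl⟩ : ∃ n : ℕ, k = -(n:ℤ) := ⟨(-k).toNat, by omega⟩
        rw [hvkb, Hb n]
        congr 1
        push_cast
        ring
    -- extract a component of a nonzero element of Q
    obtain ⟨q, hqQ, hq0⟩ : ∃ q ∈ Q, q ≠ 0 := by
      by_contra h
      push_neg at h
      exact hQ ((LieSubmodule.eq_bot_iff Q).mpr h)
    have hqS : q ∈ Submodule.span ℂ (Set.range vk) := by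
      have hSle : S ≤ Submodule.span ℂ (Set.range vk) :=
        Submodule.span_le.mpr (fun x hx => Submodule.subset_span (hrange hx))
      exact hSle (Stop q)
    obtain ⟨c, hc⟩ := Finsupp.mem_span_range_iff_exists_finsupp.mp hqS
    have hc' : (∑ k ∈ c.support, c k • vk k) = q := hc
    have hinj : Function.Injective (fun k : ℤ => lam + 2 * (k:ℂ)) := by
      intro i j hij
      simp only at hij
      have : (i : ℂ) = j := by linear_combination hij / 2
      exact_mod_cast this
    have hcomp : ∀ k ∈ c.support, c k • vk k ∈ Q := by
      apply eigen_comp_mem H Q (fun k => lam + 2 * (k:ℂ)) hinj c.support (fun k => c k • vk k)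
      · intro k _
        rw [lie_smul, Hvk k, smul_comm]
      · rw [hc']; exact hqQ
    have hsupp : c.support.Nonempty := by
      by_contra h
      rw [Finset.not_nonempty_iff_eq_empty] at h
      apply hq0
      rw [← hc', h, Finset.sum_empty]
    obtain ⟨k, hk⟩ := hsupp
    have hvkQ : vk k ∈ Q := by
      have h1 := hcomp k hk
      have h2 := SMulMemClass.smul_mem (c k)⁻¹ h1
      rwa [smul_smul, inv_mul_cancel₀ (Finsupp.mem_support_iff.mp hk), one_smul] at h2
    -- descend to v
    have descA : ∀ n : ℕ, a n ∈ Q → v ∈ Q := by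
      intro n
      induction n with
      | zero => intro h; rwa [ha0] at h
      | succ n ih =>
        intro h
        apply ih
        have h1 : ⁅F, a (n+1)⁆ ∈ Q := Q.lie_mem h
        rw [Fa n] at h1
        have h2 := SMulMemClass.smul_mem (-(lam + 2*(n:ℂ))/2 - (lam + 2*n)^2/4)⁻¹ h1
        rwa [smul_smul, inv_mul_cancel₀ (Fa_ne n), one_smul] at h2
    have descB : ∀ n : ℕ, b n ∈ Q → v ∈ Q := by
      intro n
      induction n with
      | zero => intro h; rwa [hb0] at h
      | succ n ih =>
        intro h
        apply ih
        have h1 : ⁅E, b (n+1)⁆ ∈ Q := Q.lie_mem h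
        rw [Eb n] at h1
        have h2 := SMulMemClass.smul_mem ((lam - 2*(n:ℂ))/2 - (lam - 2*n)^2/4)⁻¹ h1
        rwa [smul_smul, inv_mul_cancel₀ (Eb_ne n), one_smul] at h2
    have hvQ : v ∈ Q := by
      rcases le_or_gt 0 k with hk' | hk'
      · obtain ⟨n, rfl⟩ := Int.eq_ofNat_of_zero_le hk'
        rw [hvka] at hvkQ
        exact descA n hvkQ
      · obtain ⟨n, rfl⟩ : ∃ n : ℕ, k = -(n:ℤ) := ⟨(-k).toNat, by omega⟩
        rw [hvkb] at hvkQ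
        exact descB n hvkQ
    have hle : LieSubmodule.lieSpan ℂ g {v} ≤ Q :=
      LieSubmodule.lieSpan_le.mpr (Set.singleton_subset_iff.mpr hvQ)
    rw [hgen] at hle
    exact le_antisymm le_top hle
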